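/- Let n, k ≥ 1 be integers, h : Fin n → Fin k a function, i ∈ Fin n and R > 2 a real, and let d be the metric on Fin n with d(p,q) = R when h(p) ≠ h(q), d(p,q) = 2R when p ≠ q, h(p) = h(q) and i ∈ {p,q}, and d(p,q) = 1 when p ≠ q, h(p) = h(q) and i ∉ {p,q}. If every fiber h⁻¹(t), t ∈ Fin k, has at least 2 elements, then for every nonempty set C ⊆ Fin n with |C| ≤ k we have max_{p ∈ Fin n} min_{c ∈ C} d(p,c) ≥ R. Moreover, for the metric d₀ on Fin n defined by d₀(p,q) = 1 when p ≠ q and h(p) = h(q), and d₀(p,q) = R when h(p) ≠ h(q), there exists a set C of at most k points with max_{p ∈ Fin n} min_{c ∈ C} d₀(p,c) ≤ 1. -/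
import Mathlib


/-- The hard-instance distance function `D(h,i)`: `d(p,p) = 0`; for `p ≠ q`,
`d(p,q) = R` if `h(p) ≠ h(q)`, `d(p,q) = 2R` if `h(p) = h(q)` and `i ∈ {p,q}`,
and `d(p,q) = 1` if `h(p) = h(q)` and `i ∉ {p,q}`. -/
noncomputable def hardDist {n k : ℕ} (h : Fin n → Fin k) (i : Fin n) (R : ℝ)
    (p q : Fin n) : ℝ :=
  if p = q then 0
  else if h p ≠ h q then R
  else if i = p ∨ i = q then 2 * R
  else 1

/-- The hard-instance distance function `D(h)`: `d₀(p,p) = 0`; for `p ≠ q`,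
`d₀(p,q) = 1` if `h(p) = h(q)` and `d₀(p,q) = R` otherwise. -/
noncomputable def hardDist0 {n k : ℕ} (h : Fin n → Fin k) (R : ℝ)
    (p q : Fin n) : ℝ :=
  if p = q then 0
  else if h p = h q then 1
  else R

/-- if every fiber of `h : Fin n → Fin k` has at least two elements and
`R > 2`, then for the metric `D(h,i)` every nonempty set `C` of at most `k` centers
has `k`-center cost at least `R` on `Fin n` (there is a point whose distance to every
center is at least `R`), while for the metric `D(h)` there is a set of at most `k`
centers with `k`-center cost at most `1`. -/
theorem stmt_10 (n k : ℕ) (hn : 1 ≤ n) (hk : 1 ≤ k) (h : Fin n → Fin k)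
    (i : Fin n) (R : ℝ) (hR : 2 < R)
    (hfib : ∀ t : Fin k, 2 ≤ (Finset.univ.filter fun p => h p = t).card) :
    (∀ C : Finset (Fin n), C.Nonempty → C.card ≤ k →
      ∃ p : Fin n, ∀ c ∈ C, R ≤ hardDist h i R p c) ∧
    ∃ C : Finset (Fin n), C.Nonempty ∧ C.card ≤ k ∧
      ∀ p : Fin n, ∃ c ∈ C, hardDist0 h R p c ≤ 1 := by
  constructor
  · intro C hCne hCk
    by_cases hall : ∀ t : Fin k, ∃ c ∈ C, h c = t
    · -- every fiber contains a center; h is injective on C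
      have himg : (C.image h) = Finset.univ := by
        apply Finset.eq_univ_of_forall
        intro t
        obtain ⟨c, hcC, hc⟩ := hall t
        exact Finset.mem_image.mpr ⟨c, hcC, hc⟩
      have hinj : Set.InjOn h C := by
        rw [← Finset.card_image_iff]
        have h1 : (C.image h).card = k := by rw [himg, Finset.card_univ, Fintype.card_fin]
        have h2 : (C.image h).card ≤ C.card := Finset.card_image_le
        omega
      obtain ⟨c₀, hc₀C, hc₀⟩ := hall (h i)
      have key : ∀ p : Fin n, p ≠ c₀ → h p = h i → (i = p ∨ i = c₀) →
          ∀ c ∈ C, R ≤ hardDist h i R p c := by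
        intro p hpc hp hi c hcC
        by_cases hc : c = c₀
        · subst hc
          have : hardDist h i R p c = 2 * R := by
            unfold hardDist
            rw [if_neg hpc, if_neg (by simp [hp, hc₀]), if_pos (by exact hi)]
          linarith
        · have hhc : h c ≠ h p := by
            intro he
            exact hc (hinj hcC hc₀C (by rw [he, hp, hc₀]))
          have hpc' : p ≠ c := fun he => hhc (by rw [he])
          have : hardDist h i R p c = R := by
            unfold hardDist
            rw [if_neg hpc', if_pos (Ne.symm hhc)]
          linarith
      by_cases hic : i = c₀
      · have h2 : 1 < (Finset.univ.filter fun p => h p = h i).card := lt_of_lt_of_le one_lt_two (hfib (h i))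
        obtain ⟨p, hpmem, hpne⟩ := Finset.exists_mem_ne h2 c₀
        have hp : h p = h i := (Finset.mem_filter.mp hpmem).2
        exact ⟨p, key p hpne hp (Or.inr hic)⟩
      · exact ⟨i, key i hic rfl (Or.inl rfl)⟩
    · push_neg at hall
      obtain ⟨t, ht⟩ := hall
      have h2 : 0 < (Finset.univ.filter fun p => h p = t).card := lt_of_lt_of_le two_pos (hfib t)
      obtain ⟨p, hpmem⟩ := Finset.card_pos.mp h2
      have hp : h p = t := (Finset.mem_filter.mp hpmem).2
      refine ⟨p, fun c hcC => ?_⟩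
      have hhc : h c ≠ h p := by rw [hp]; exact ht c hcC
      have hpc : p ≠ c := fun he => hhc (by rw [he])
      have : hardDist h i R p c = R := by
        unfold hardDist
        rw [if_neg hpc, if_pos (Ne.symm hhc)]
      linarith
  · have hrep : ∀ t : Fin k, ∃ p : Fin n, h p = t := by
      intro t
      have h2 : 0 < (Finset.univ.filter fun p => h p = t).card := lt_of_lt_of_le two_pos (hfib t)
      obtain ⟨p, hpmem⟩ := Finset.card_pos.mp h2
      exact ⟨p, (Finset.mem_filter.mp hpmem).2⟩
    choose r hr using hrep
    refine ⟨Finset.univ.image r, ?_, ?_, ?_⟩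
    · apply Finset.Nonempty.image
      haveI : Nonempty (Fin k) := ⟨⟨0, hk⟩⟩
      exact Finset.univ_nonempty
    · calc (Finset.univ.image r).card ≤ (Finset.univ : Finset (Fin k)).card := Finset.card_image_le
        _ = k := by rw [Finset.card_univ, Fintype.card_fin]
    · intro p
      refine ⟨r (h p), Finset.mem_image.mpr ⟨h p, Finset.mem_univ _, rfl⟩, ?_⟩
      unfold hardDist0
      by_cases hpe : p = r (h p)
      · rw [if_pos hpe]; norm_num
      · rw [if_neg hpe, if_pos (by rw [hr])]
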